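/- Let μ be the hardcore Gibbs distribution with fugacity λ ≥ 4^{1/ε + (log₂ n)/(εn)} on the independent sets of an n-vertex graph whose maximum independent set has size N ≥ n/2. Then the μ-probability that a sample has size less than (1−ε)N is at most 1/n. -/

import Mathlib

/-- **The hardcore measure concentrates on large independent sets.**
Let `G` be a graph on `n` vertices with independence number `N ≥ n/2`, let
`ε ∈ (0,1)` and `λ ≥ 4^{1/ε + (log₂ n)/(εn)}`. Then the probability, under the hardcore
Gibbs measure `μ(I) ∝ λ^{|I|}` on independent sets of `G`, that the sampled independent
set has size less than `(1−ε)N` is at most `1/n`. -/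
theorem stmt_16 {V : Type*} [Fintype V] [DecidableEq V]
    (G : SimpleGraph V) [DecidableRel G.Adj]
    (n N : ℕ) (hcard : Fintype.card V = n) (hn : 0 < n)
    (hN : IsGreatest {m : ℕ | ∃ I : Finset V,
      (∀ a ∈ I, ∀ b ∈ I, a ≠ b → ¬ G.Adj a b) ∧ I.card = m} N)
    (hNhalf : (n : ℝ) / 2 ≤ (N : ℝ))
    (ε : ℝ) (hε0 : 0 < ε) (hε1 : ε < 1)
    (lam : ℝ) (hlam : (4 : ℝ) ^ (1 / ε + Real.logb 2 n / (ε * n)) ≤ lam) :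
    (∑ I ∈ Finset.univ.filter (fun I : Finset V =>
        (∀ a ∈ I, ∀ b ∈ I, a ≠ b → ¬ G.Adj a b) ∧ (I.card : ℝ) < (1 - ε) * N),
        lam ^ I.card) /
      (∑ I ∈ Finset.univ.filter (fun I : Finset V =>
        ∀ a ∈ I, ∀ b ∈ I, a ≠ b → ¬ G.Adj a b), lam ^ I.card) ≤ 1 / n := by
  have hn1 : (1 : ℝ) ≤ (n : ℝ) := by exact_mod_cast hn
  have hnpos : (0 : ℝ) < n := lt_of_lt_of_le one_pos hn1
  have hlogb : 0 ≤ Real.logb 2 n := Real.logb_nonneg one_lt_two hn1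
  set e : ℝ := 1 / ε + Real.logb 2 n / (ε * n) with he_def
  have he : 0 < e := by positivity
  have hlam1 : (1 : ℝ) ≤ lam := by
    refine le_trans ?_ hlam
    exact Real.one_le_rpow (by norm_num) he.le
  have hlam0 : (0 : ℝ) < lam := lt_of_lt_of_le one_pos hlam1
  -- the max independent set
  obtain ⟨⟨Imax, hImaxInd, hImaxCard⟩, _⟩ := hN
  have hmem : Imax ∈ Finset.univ.filter (fun I : Finset V =>
      ∀ a ∈ I, ∀ b ∈ I, a ≠ b → ¬ G.Adj a b) := by
    simp only [Finset.mem_filter, Finset.mem_univ, true_and]; exact hImaxInd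
  -- denominator lower bound
  have hD : lam ^ (N : ℝ) ≤ ∑ I ∈ Finset.univ.filter (fun I : Finset V =>
      ∀ a ∈ I, ∀ b ∈ I, a ≠ b → ¬ G.Adj a b), lam ^ I.card := by
    have := Finset.single_le_sum (f := fun I : Finset V => lam ^ I.card)
      (fun I _ => pow_nonneg hlam0.le _) hmem
    calc lam ^ (N : ℝ) = lam ^ Imax.card := by
          rw [← hImaxCard, Real.rpow_natCast]
      _ ≤ _ := this
  have hDpos : (0 : ℝ) < ∑ I ∈ Finset.univ.filter (fun I : Finset V =>
      ∀ a ∈ I, ∀ b ∈ I, a ≠ b → ¬ G.Adj a b), lam ^ I.card :=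
    lt_of_lt_of_le (Real.rpow_pos_of_pos hlam0 _) hD
  -- numerator upper bound
  have hS : (∑ I ∈ Finset.univ.filter (fun I : Finset V =>
      (∀ a ∈ I, ∀ b ∈ I, a ≠ b → ¬ G.Adj a b) ∧ (I.card : ℝ) < (1 - ε) * N),
      lam ^ I.card) ≤ (2 : ℝ) ^ n * lam ^ ((1 - ε) * (N : ℝ)) := by
    have hb : ∀ I ∈ Finset.univ.filter (fun I : Finset V =>
        (∀ a ∈ I, ∀ b ∈ I, a ≠ b → ¬ G.Adj a b) ∧ (I.card : ℝ) < (1 - ε) * N),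
        lam ^ I.card ≤ lam ^ ((1 - ε) * (N : ℝ)) := by
      intro I hI
      rw [Finset.mem_filter] at hI
      calc lam ^ I.card = lam ^ (I.card : ℝ) := (Real.rpow_natCast _ _).symm
        _ ≤ lam ^ ((1 - ε) * (N : ℝ)) :=
            Real.rpow_le_rpow_of_exponent_le hlam1 hI.2.2.le
    calc (∑ I ∈ Finset.univ.filter (fun I : Finset V =>
          (∀ a ∈ I, ∀ b ∈ I, a ≠ b → ¬ G.Adj a b) ∧ (I.card : ℝ) < (1 - ε) * N),
          lam ^ I.card)
        ≤ (Finset.univ.filter (fun I : Finset V =>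
          (∀ a ∈ I, ∀ b ∈ I, a ≠ b → ¬ G.Adj a b) ∧ (I.card : ℝ) < (1 - ε) * N)).card
            • lam ^ ((1 - ε) * (N : ℝ)) := Finset.sum_le_card_nsmul _ _ _ hb
      _ ≤ (2 : ℝ) ^ n * lam ^ ((1 - ε) * (N : ℝ)) := by
          rw [nsmul_eq_mul]
          apply mul_le_mul_of_nonneg_right _ (Real.rpow_nonneg hlam0.le _)
          have h1 : (Finset.univ.filter (fun I : Finset V =>
              (∀ a ∈ I, ∀ b ∈ I, a ≠ b → ¬ G.Adj a b) ∧ (I.card : ℝ) < (1 - ε) * N)).card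
              ≤ Fintype.card (Finset V) := by
            rw [← Finset.card_univ]
            exact Finset.card_filter_le _ _
          rw [Fintype.card_finset, hcard] at h1
          calc ((Finset.univ.filter (fun I : Finset V =>
              (∀ a ∈ I, ∀ b ∈ I, a ≠ b → ¬ G.Adj a b) ∧ (I.card : ℝ) < (1 - ε) * N)).card : ℝ)
              ≤ ((2 ^ n : ℕ) : ℝ) := by exact_mod_cast h1
            _ = (2 : ℝ) ^ n := by push_cast; ring
  -- key inequality : n * 2^n * lam^((1-ε)N) ≤ lam^N
  have hkey : (n : ℝ) * 2 ^ n * lam ^ ((1 - ε) * (N : ℝ)) ≤ lam ^ (N : ℝ) := by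
    have hsplit : lam ^ (N : ℝ) = lam ^ ((1 - ε) * (N : ℝ)) * lam ^ (ε * (N : ℝ)) := by
      rw [← Real.rpow_add hlam0]; ring_nf
    rw [hsplit]
    rw [mul_comm (lam ^ ((1 - ε) * (N : ℝ)))]
    apply mul_le_mul_of_nonneg_right _ (Real.rpow_nonneg hlam0.le _)
    -- n * 2^n ≤ lam^(εN)
    have h2N : (n : ℝ) ≤ 2 * N := by linarith
    have hεN : 0 ≤ ε * (N : ℝ) := by positivity
    have h4 : ((4 : ℝ) ^ e) ^ (ε * (N : ℝ)) ≤ lam ^ (ε * (N : ℝ)) :=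
      Real.rpow_le_rpow (Real.rpow_nonneg (by norm_num) _) hlam hεN
    set c : ℝ := (N : ℝ) * Real.logb 2 n / n with hc_def
    have hexp : e * (ε * (N : ℝ)) = (N : ℝ) + c := by
      rw [he_def, hc_def]
      field_simp
    have h4e : ((4 : ℝ) ^ e) ^ (ε * (N : ℝ)) =
        (2 : ℝ) ^ (2 * (N : ℝ)) * (2 : ℝ) ^ (2 * c) := by
      rw [← Real.rpow_mul (by norm_num : (0:ℝ) ≤ 4), hexp]
      have h42 : (4 : ℝ) = (2 : ℝ) ^ (2 : ℝ) := by
        rw [show ((2:ℝ):ℝ) = ((2:ℕ):ℝ) by norm_num, Real.rpow_natCast]; norm_num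
      rw [h42, ← Real.rpow_mul (by norm_num : (0:ℝ) ≤ 2), ← Real.rpow_add (by norm_num : (0:ℝ) < 2)]
      ring_nf
    have hn2 : (n : ℝ) ≤ (2 : ℝ) ^ (2 * c) := by
      have hlogle : Real.logb 2 n ≤ 2 * c := by
        rw [hc_def]
        rw [show 2 * ((N:ℝ) * Real.logb 2 n / n) = Real.logb 2 n * (2 * N / n) by ring]
        refine le_mul_of_one_le_right hlogb ?_
        rw [le_div_iff₀ hnpos]; linarith
      calc (n : ℝ) = (2 : ℝ) ^ Real.logb 2 n := (Real.rpow_logb two_pos (by norm_num) hnpos).symm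
        _ ≤ (2 : ℝ) ^ (2 * c) := Real.rpow_le_rpow_of_exponent_le one_le_two hlogle
    have h2n : (2 : ℝ) ^ n ≤ (2 : ℝ) ^ (2 * (N : ℝ)) := by
      calc (2 : ℝ) ^ n = (2 : ℝ) ^ ((n : ℕ) : ℝ) := (Real.rpow_natCast _ _).symm
        _ ≤ (2 : ℝ) ^ (2 * (N : ℝ)) := Real.rpow_le_rpow_of_exponent_le one_le_two h2N
    calc (n : ℝ) * 2 ^ n ≤ (2 : ℝ) ^ (2 * c) * (2 : ℝ) ^ (2 * (N : ℝ)) := by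
          exact mul_le_mul hn2 h2n (by positivity) (by positivity)
      _ = ((4 : ℝ) ^ e) ^ (ε * (N : ℝ)) := by rw [h4e]; ring
      _ ≤ lam ^ (ε * (N : ℝ)) := h4
  -- conclude
  rw [div_le_div_iff₀ hDpos hnpos]
  calc (∑ I ∈ Finset.univ.filter (fun I : Finset V =>
        (∀ a ∈ I, ∀ b ∈ I, a ≠ b → ¬ G.Adj a b) ∧ (I.card : ℝ) < (1 - ε) * N),
        lam ^ I.card) * n
      ≤ ((2 : ℝ) ^ n * lam ^ ((1 - ε) * (N : ℝ))) * n :=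
        mul_le_mul_of_nonneg_right hS hnpos.le
    _ = (n : ℝ) * 2 ^ n * lam ^ ((1 - ε) * (N : ℝ)) := by ring
    _ ≤ lam ^ (N : ℝ) := hkey
    _ ≤ 1 * (∑ I ∈ Finset.univ.filter (fun I : Finset V =>
        ∀ a ∈ I, ∀ b ∈ I, a ≠ b → ¬ G.Adj a b), lam ^ I.card) := by rw [one_mul]; exact hD
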